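/- For every integer n ≥ 2, the convex hull P_n of T_n equals the set of all n×n real doubly stochastic matrices Y (nonnegative entries, all row sums 1, all column sums 1) satisfying Y_{ij} = 0 for all j ≥ i+2. -/

import Mathlib

/-- `T n` is the set of `n × n` permutation matrices `π` (with real entries)
such that `π i j = 0` whenever `j ≥ i + 2` (`0`-based indices, matching the
`1`-based condition in the paper, which is equivalent to `σ i ≤ i + 1` for the
underlying permutation `σ`). -/
def T (n : ℕ) : Set (Matrix (Fin n) (Fin n) ℝ) :=
  {M | ∃ σ : Equiv.Perm (Fin n),
    (∀ i : Fin n, (σ i : ℕ) ≤ (i : ℕ) + 1) ∧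
    M = Matrix.of fun i j => if σ i = j then (1 : ℝ) else 0}

/-- `P n` is the convex hull of `T n`. -/
def P (n : ℕ) : Set (Matrix (Fin n) (Fin n) ℝ) := convexHull ℝ (T n)

lemma permMatrix_apply {n : ℕ} (σ : Equiv.Perm (Fin n)) (i j : Fin n) :
    σ.permMatrix ℝ i j = if σ i = j then (1 : ℝ) else 0 := by
  simp [Equiv.Perm.permMatrix, PEquiv.toMatrix_apply, Equiv.toPEquiv_apply]

lemma rhs_convex (n : ℕ) :
    Convex ℝ {Y : Matrix (Fin n) (Fin n) ℝ |
      (∀ i j : Fin n, 0 ≤ Y i j) ∧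
      (∀ i : Fin n, ∑ j, Y i j = 1) ∧
      (∀ j : Fin n, ∑ i, Y i j = 1) ∧
      (∀ i j : Fin n, (i : ℕ) + 2 ≤ (j : ℕ) → Y i j = 0)} := by
  rintro X ⟨hX0, hXr, hXc, hXz⟩ Y ⟨hY0, hYr, hYc, hYz⟩ a b ha hb hab
  refine ⟨fun i j => ?_, fun i => ?_, fun j => ?_, fun i j hij => ?_⟩
  · have : (a • X + b • Y) i j = a * X i j + b * Y i j := by
      simp [Matrix.add_apply, Matrix.smul_apply, smul_eq_mul]
    rw [this]
    exact add_nonneg (mul_nonneg ha (hX0 i j)) (mul_nonneg hb (hY0 i j))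
  · have : ∀ j, (a • X + b • Y) i j = a * X i j + b * Y i j := fun j => by
      simp [Matrix.add_apply, Matrix.smul_apply, smul_eq_mul]
    simp only [this, Finset.sum_add_distrib, ← Finset.mul_sum, hXr i, hYr i,
      mul_one, hab]
  · have : ∀ i, (a • X + b • Y) i j = a * X i j + b * Y i j := fun i => by
      simp [Matrix.add_apply, Matrix.smul_apply, smul_eq_mul]
    simp only [this, Finset.sum_add_distrib, ← Finset.mul_sum, hXc j, hYc j,
      mul_one, hab]
  · have : (a • X + b • Y) i j = a * X i j + b * Y i j := by
      simp [Matrix.add_apply, Matrix.smul_apply, smul_eq_mul]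
    rw [this, hXz i j hij, hYz i j hij, mul_zero, mul_zero, add_zero]

/-- For every `n ≥ 2`, the polytope `P n` equals the set of all `n × n` real
doubly stochastic matrices `Y` satisfying `Y i j = 0` for all `j ≥ i + 2`. -/
theorem P_eq_doublyStochastic (n : ℕ) (hn : 2 ≤ n) :
    P n = {Y : Matrix (Fin n) (Fin n) ℝ |
      (∀ i j : Fin n, 0 ≤ Y i j) ∧
      (∀ i : Fin n, ∑ j, Y i j = 1) ∧
      (∀ j : Fin n, ∑ i, Y i j = 1) ∧
      (∀ i j : Fin n, (i : ℕ) + 2 ≤ (j : ℕ) → Y i j = 0)} := by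
  apply le_antisymm
  · -- convex hull ⊆ RHS: RHS is convex and contains T n
    apply convexHull_min _ (rhs_convex n)
    rintro M ⟨σ, hσ, rfl⟩
    refine ⟨fun i j => ?_, fun i => ?_, fun j => ?_, fun i j hij => ?_⟩
    · dsimp only [Matrix.of_apply]; split <;> norm_num
    · simp
    · have : ∀ i : Fin n, (if σ i = j then (1:ℝ) else 0) =
          if i = σ.symm j then 1 else 0 := by
        intro i; congr 1
        simp [Equiv.eq_symm_apply, eq_comm]
      simp [this]
    · dsimp only [Matrix.of_apply]
      rw [if_neg]
      intro h
      have := hσ i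
      rw [h] at this
      omega
  · -- RHS ⊆ convex hull
    rintro Y ⟨hY0, hYr, hYc, hYz⟩
    have hds : Y ∈ doublyStochastic ℝ (Fin n) := by
      rw [mem_doublyStochastic_iff_sum]
      exact ⟨hY0, hYr, hYc⟩
    obtain ⟨w, hw0, hw1, hwY⟩ :=
      exists_eq_sum_perm_of_mem_doublyStochastic hds
    -- each σ with w σ ≠ 0 satisfies the constraint
    have key : ∀ σ : Equiv.Perm (Fin n), w σ ≠ 0 →
        ∀ i : Fin n, (σ i : ℕ) ≤ (i : ℕ) + 1 := by
      intro σ hσ i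
      by_contra h
      push_neg at h
      have hij : (i : ℕ) + 2 ≤ ((σ i : Fin n) : ℕ) := h
      have hz : Y i (σ i) = 0 := hYz i (σ i) hij
      have hle : w σ ≤ Y i (σ i) := by
        have : Y i (σ i) = ∑ τ : Equiv.Perm (Fin n), w τ * τ.permMatrix ℝ i (σ i) := by
          rw [← hwY]
          simp [Matrix.sum_apply, Matrix.smul_apply, smul_eq_mul]
        rw [this]
        have := Finset.single_le_sum
          (f := fun τ : Equiv.Perm (Fin n) => w τ * τ.permMatrix ℝ i (σ i))
          (fun τ _ => by
            have h0 : (0:ℝ) ≤ τ.permMatrix ℝ i (σ i) := by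
              rw [permMatrix_apply]; split <;> norm_num
            exact mul_nonneg (hw0 τ) h0)
          (Finset.mem_univ σ)
        simpa [Equiv.toPEquiv_apply] using this
      have : 0 < w σ := lt_of_le_of_ne (hw0 σ) (Ne.symm hσ)
      linarith
    -- replace σ's with zero weight by the identity
    set z : Equiv.Perm (Fin n) → Matrix (Fin n) (Fin n) ℝ :=
      fun σ => if w σ = 0 then (1 : Equiv.Perm (Fin n)).permMatrix ℝ
               else σ.permMatrix ℝ with hz
    have hzmem : ∀ σ, z σ ∈ T n := by
      intro σ
      by_cases h : w σ = 0
      · exact ⟨1, fun i => by simp, by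
          simp only [hz, if_pos h]
          ext i j
          simp [PEquiv.toMatrix_apply, Equiv.toPEquiv_apply]
          split_ifs <;> simp_all⟩
      · exact ⟨σ, key σ h, by
          simp only [hz, if_neg h]
          ext i j
          simp [PEquiv.toMatrix_apply, Equiv.toPEquiv_apply]⟩
    have hsum : ∑ σ : Equiv.Perm (Fin n), w σ • z σ = Y := by
      rw [← hwY]
      apply Finset.sum_congr rfl
      intro σ _
      by_cases h : w σ = 0
      · simp [h]
      · simp [hz, if_neg h]
    exact mem_convexHull_of_exists_fintype w z hw0 hw1 hzmem hsum
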